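/- Let n ≥ 2 be a natural number. The n-th approximation number of the Volterra operator V : L¹(0,1) → C[0,1] equals 1/2, i.e., the infimum of ‖V − F‖ over all bounded linear operators F : L¹(0,1) → C[0,1] with rank F < n equals 1/2. -/

import Mathlib

open MeasureTheory

noncomputable section

/-- The space `L¹(0,1)` of Lebesgue integrable functions on `(0,1)`. -/
abbrev L1 : Type := Lp ℝ 1 ((volume : Measure ℝ).restrict (Set.Ioo (0:ℝ) 1))

/-- The space `C[0,1]` of continuous real functions on `[0,1]` with the supremum norm. -/
abbrev C01 : Type := C(Set.Icc (0:ℝ) 1, ℝ)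

/-- `V` is the Volterra operator: `(V f)(t) = ∫₀ᵗ f(s) ds` for `f ∈ L¹(0,1)`. -/
def IsVolterra (V : L1 →L[ℝ] C01) : Prop :=
  ∀ f : L1, ∀ t : Set.Icc (0:ℝ) 1,
    V f t = ∫ s in Set.Ioo (0:ℝ) (t:ℝ), f s
      ∂((volume : Measure ℝ).restrict (Set.Ioo (0:ℝ) 1))

def F0 : L1 →L[ℝ] C01 := (L1.integralCLM).smulRight ((1/2 : ℝ) • (1 : C01))

lemma F0_apply (f : L1) (t : Set.Icc (0:ℝ) 1) :
    F0 f t = (∫ a, f a ∂((volume : Measure ℝ).restrict (Set.Ioo (0:ℝ) 1))) * (1/2) := by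
  simp [F0, ContinuousLinearMap.smulRight_apply, ← L1.integral_eq, L1.integral_eq_integral]

lemma norm_V_sub_F0_le (V : L1 →L[ℝ] C01) (hV : IsVolterra V) : ‖V - F0‖ ≤ 1/2 := by
  apply ContinuousLinearMap.opNorm_le_bound _ (by norm_num)
  intro f
  rw [ContinuousLinearMap.sub_apply]
  rw [show (1:ℝ)/2 * ‖f‖ = ‖f‖/2 by ring]
  refine (ContinuousMap.norm_le _ (by positivity)).mpr ?_
  intro t
  set μ := (volume : Measure ℝ).restrict (Set.Ioo (0:ℝ) 1)
  have hint : Integrable (f : ℝ → ℝ) μ := L1.integrable_coeFn f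
  have hsplit : (∫ s in Set.Ioo (0:ℝ) (t:ℝ), f s ∂μ) + (∫ s in (Set.Ioo (0:ℝ) (t:ℝ))ᶜ, f s ∂μ)
      = ∫ a, f a ∂μ := integral_add_compl measurableSet_Ioo hint
  have hnormsplit : (∫ s in Set.Ioo (0:ℝ) (t:ℝ), ‖f s‖ ∂μ) + (∫ s in (Set.Ioo (0:ℝ) (t:ℝ))ᶜ, ‖f s‖ ∂μ)
      = ∫ a, ‖f a‖ ∂μ := integral_add_compl measurableSet_Ioo hint.norm
  have hnorm : ‖f‖ = ∫ a, ‖f a‖ ∂μ := L1.norm_eq_integral_norm f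
  have hA : ‖∫ s in Set.Ioo (0:ℝ) (t:ℝ), f s ∂μ‖ ≤ ∫ s in Set.Ioo (0:ℝ) (t:ℝ), ‖f s‖ ∂μ :=
    norm_integral_le_integral_norm _
  have hB : ‖∫ s in (Set.Ioo (0:ℝ) (t:ℝ))ᶜ, f s ∂μ‖ ≤ ∫ s in (Set.Ioo (0:ℝ) (t:ℝ))ᶜ, ‖f s‖ ∂μ :=
    norm_integral_le_integral_norm _
  have hval : (V f - F0 f) t = ((∫ s in Set.Ioo (0:ℝ) (t:ℝ), f s ∂μ) - (∫ s in (Set.Ioo (0:ℝ) (t:ℝ))ᶜ, f s ∂μ)) / 2 := by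
    have := hV f t
    simp only [ContinuousMap.sub_apply]
    rw [this, F0_apply, ← hsplit]
    ring
  rw [hval]
  rw [Real.norm_eq_abs, abs_div]
  rw [hnorm, ← hnormsplit]
  have := abs_sub (∫ s in Set.Ioo (0:ℝ) (t:ℝ), f s ∂μ) (∫ s in (Set.Ioo (0:ℝ) (t:ℝ))ᶜ, f s ∂μ)
  have h1 : |(∫ s in Set.Ioo (0:ℝ) (t:ℝ), f s ∂μ) - (∫ s in (Set.Ioo (0:ℝ) (t:ℝ))ᶜ, f s ∂μ)|
      ≤ (∫ s in Set.Ioo (0:ℝ) (t:ℝ), ‖f s‖ ∂μ) + (∫ s in (Set.Ioo (0:ℝ) (t:ℝ))ᶜ, ‖f s‖ ∂μ) := by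
    calc |(∫ s in Set.Ioo (0:ℝ) (t:ℝ), f s ∂μ) - (∫ s in (Set.Ioo (0:ℝ) (t:ℝ))ᶜ, f s ∂μ)|
        ≤ |∫ s in Set.Ioo (0:ℝ) (t:ℝ), f s ∂μ| + |∫ s in (Set.Ioo (0:ℝ) (t:ℝ))ᶜ, f s ∂μ| := abs_sub _ _
      _ ≤ _ := add_le_add hA hB
  simp only [abs_of_nonneg (by norm_num : (0:ℝ) ≤ 2)] at *
  linarith

def Ik (k : ℕ) : Set ℝ := Set.Ioo ((1/2:ℝ)^(k+2)) ((1/2:ℝ)^(k+1))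

lemma Ik_subset (k : ℕ) : Ik k ⊆ Set.Ioo (0:ℝ) 1 := by
  intro x hx
  constructor
  · exact lt_trans (by positivity) hx.1
  · exact lt_of_lt_of_le hx.2 (by
      calc (1/2:ℝ)^(k+1) ≤ (1/2:ℝ)^1 := pow_le_pow_of_le_one (by norm_num) (by norm_num) (by omega)
        _ ≤ 1 := by norm_num)

lemma mu_Ik (k : ℕ) :
    ((volume : Measure ℝ).restrict (Set.Ioo (0:ℝ) 1)) (Ik k) = ENNReal.ofReal ((1/2:ℝ)^(k+2)) := by
  have hm : MeasurableSet (Ik k) := measurableSet_Ioo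
  rw [Measure.restrict_apply hm]
  rw [Set.inter_eq_self_of_subset_left (Ik_subset k)]
  rw [Ik, Real.volume_Ioo]
  congr 1
  have : (1/2:ℝ)^(k+1) = 2 * (1/2:ℝ)^(k+2) := by
    rw [pow_succ]
    ring
  rw [this]; ring

lemma mu_Ik_ne_top (k : ℕ) :
    ((volume : Measure ℝ).restrict (Set.Ioo (0:ℝ) 1)) (Ik k) ≠ ⊤ := by
  rw [mu_Ik]; exact ENNReal.ofReal_ne_top

def fk (k : ℕ) : L1 :=
  indicatorConstLp 1 measurableSet_Ioo (mu_Ik_ne_top k) ((2:ℝ)^(k+2))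

lemma norm_fk (k : ℕ) : ‖fk k‖ = 1 := by
  have h := norm_indicatorConstLp (p := 1) (μ := (volume : Measure ℝ).restrict (Set.Ioo (0:ℝ) 1)) (s := Set.Ioo ((1/2:ℝ)^(k+2)) ((1/2:ℝ)^(k+1))) (c := (2:ℝ)^(k+2)) (hs := measurableSet_Ioo) (hμs := mu_Ik_ne_top k) one_ne_zero ENNReal.one_ne_top
  rw [fk, h]
  rw [show Set.Ioo ((1/2:ℝ)^(k+2)) ((1/2:ℝ)^(k+1)) = Ik k from rfl, measureReal_def]
  rw [mu_Ik, ENNReal.toReal_ofReal (by positivity)]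
  simp only [ENNReal.toReal_one, div_one, Real.rpow_one]
  rw [Real.norm_eq_abs, abs_of_nonneg (by positivity), div_pow, one_pow]
  field_simp

lemma setIntegral_fk (k : ℕ) (A : Set ℝ) (hA : MeasurableSet A) :
    ∫ s in A, (fk k) s ∂((volume : Measure ℝ).restrict (Set.Ioo (0:ℝ) 1))
      = (((volume : Measure ℝ).restrict (Set.Ioo (0:ℝ) 1)) (Ik k ∩ A)).toReal * (2:ℝ)^(k+2) := by
  set μ := (volume : Measure ℝ).restrict (Set.Ioo (0:ℝ) 1)
  have hcoe : (fk k : ℝ → ℝ) =ᵐ[μ] (Ik k).indicator (fun _ => (2:ℝ)^(k+2)) :=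
    indicatorConstLp_coeFn
  have hcoe' : (fk k : ℝ → ℝ) =ᵐ[μ.restrict A] (Ik k).indicator (fun _ => (2:ℝ)^(k+2)) :=
    ae_restrict_of_ae hcoe
  rw [integral_congr_ae hcoe']
  have hm : MeasurableSet (Ik k) := measurableSet_Ioo
  rw [integral_indicator_const _ hm]
  rw [measureReal_def, Measure.restrict_apply hm]
  rw [show μ = (volume : Measure ℝ).restrict (Set.Ioo (0:ℝ) 1) from rfl,
    Measure.restrict_apply (hm.inter hA)]
  simp [mul_comm]

def tk (k : ℕ) : Set.Icc (0:ℝ) 1 :=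
  ⟨(1/2:ℝ)^(k+2), ⟨by positivity, by
    calc (1/2:ℝ)^(k+2) ≤ (1/2:ℝ)^1 := pow_le_pow_of_le_one (by norm_num) (by norm_num) (by omega)
      _ ≤ 1 := by norm_num⟩⟩

lemma V_fk_self (V : L1 →L[ℝ] C01) (hV : IsVolterra V) (k : ℕ) :
    V (fk k) (tk k) = 0 := by
  rw [hV (fk k) (tk k)]
  rw [setIntegral_fk k _ measurableSet_Ioo]
  have : Ik k ∩ Set.Ioo (0:ℝ) ((tk k : ℝ)) = ∅ := by
    apply Set.eq_empty_of_forall_notMem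
    rintro x ⟨hx1, hx2⟩
    exact absurd hx2.2 (not_lt.mpr (le_of_lt hx1.1))
  rw [this]
  simp

lemma V_fk_lt (V : L1 →L[ℝ] C01) (hV : IsVolterra V) {j k : ℕ} (hjk : k < j) :
    V (fk j) (tk k) = 1 := by
  rw [hV (fk j) (tk k)]
  rw [setIntegral_fk j _ measurableSet_Ioo]
  have hsub : Ik j ⊆ Set.Ioo (0:ℝ) ((tk k : ℝ)) := by
    intro x hx
    refine ⟨lt_trans (by positivity) hx.1, lt_of_lt_of_le hx.2 ?_⟩
    exact pow_le_pow_of_le_one (by norm_num) (by norm_num) (by omega)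
  rw [Set.inter_eq_self_of_subset_left hsub]
  rw [mu_Ik, ENNReal.toReal_ofReal (by positivity)]
  rw [div_pow, one_pow]
  field_simp

lemma half_le_norm_sub (V : L1 →L[ℝ] C01) (hV : IsVolterra V) (F : L1 →L[ℝ] C01)
    (hF : LinearMap.rank (F : L1 →ₗ[ℝ] C01) < Cardinal.aleph0) :
    1/2 ≤ ‖V - F‖ := by
  by_contra h
  push_neg at h
  have key : ∀ j k : ℕ, k < j → (1:ℝ) - 2*‖V-F‖ ≤ ‖F (fk j) - F (fk k)‖ := by
    intro j k hjk
    have h1 : (1:ℝ) ≤ ‖V (fk j) - V (fk k)‖ := by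
      have hpt := ContinuousMap.norm_coe_le_norm (V (fk j) - V (fk k)) (tk k)
      rw [ContinuousMap.sub_apply, V_fk_lt V hV hjk, V_fk_self V hV k] at hpt
      simpa using hpt
    have h2 : ‖(V - F) (fk j)‖ ≤ ‖V - F‖ := by
      simpa [norm_fk] using (V - F).le_opNorm (fk j)
    have h3 : ‖(V - F) (fk k)‖ ≤ ‖V - F‖ := by
      simpa [norm_fk] using (V - F).le_opNorm (fk k)
    have hid : V (fk j) - V (fk k)
        = (F (fk j) - F (fk k)) + ((V - F) (fk j) - (V - F) (fk k)) := by
      simp only [ContinuousLinearMap.sub_apply]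
      abel
    rw [hid] at h1
    have h4 := norm_add_le (F (fk j) - F (fk k)) ((V - F) (fk j) - (V - F) (fk k))
    have h5 := norm_sub_le ((V - F) (fk j)) ((V - F) (fk k))
    linarith
  set p := LinearMap.range (F : L1 →ₗ[ℝ] C01)
  haveI : Module.Free ℝ p := Module.Free.of_divisionRing ℝ p
  haveI : Module.Finite ℝ p := Module.rank_lt_aleph0_iff.mp hF
  set g : ℕ → p := fun k => ⟨F (fk k), LinearMap.mem_range_self _ _⟩ with hg
  have hgb : ∀ k, g k ∈ Metric.closedBall (0:p) ‖F‖ := by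
    intro k
    rw [Metric.mem_closedBall, dist_zero_right]
    calc ‖g k‖ = ‖F (fk k)‖ := rfl
      _ ≤ ‖F‖ * ‖fk k‖ := F.le_opNorm _
      _ = ‖F‖ := by rw [norm_fk]; ring
  obtain ⟨a, -, φ, hφ, hconv⟩ :=
    tendsto_subseq_of_bounded Metric.isBounded_closedBall hgb
  have hcauchy : CauchySeq (g ∘ φ) := hconv.cauchySeq
  have hε : (0:ℝ) < 1 - 2*‖V - F‖ := by linarith
  obtain ⟨N, hN⟩ := Metric.cauchySeq_iff'.mp hcauchy (1 - 2*‖V - F‖) hε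
  have hd := hN (N+1) (by omega)
  have hdist : dist ((g ∘ φ) (N+1)) ((g ∘ φ) N) = ‖F (fk (φ (N+1))) - F (fk (φ N))‖ := by
    rw [Subtype.dist_eq, dist_eq_norm]
    rfl
  have hkey := key (φ (N+1)) (φ N) (hφ (by omega))
  rw [hdist] at hd
  linarith

lemma rank_F0_le : LinearMap.rank (F0 : L1 →ₗ[ℝ] C01) ≤ 1 := by
  have hr : LinearMap.range (F0 : L1 →ₗ[ℝ] C01)
      ≤ Submodule.span ℝ {(1/2:ℝ) • (1:C01)} := by
    rintro y ⟨x, rfl⟩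
    simp only [ContinuousLinearMap.coe_coe, F0, ContinuousLinearMap.smulRight_apply]
    exact Submodule.smul_mem _ _ (Submodule.mem_span_singleton_self _)
  refine le_trans (Submodule.rank_mono hr) ?_
  refine le_trans (rank_span_le _) ?_
  simp

/-- The `n`-th approximation number of the Volterra operator `V : L¹(0,1) → C[0,1]`
equals `1/2` for `n ≥ 2`. -/
theorem approximation_number_volterra (n : ℕ) (hn : 2 ≤ n)
    (V : L1 →L[ℝ] C01) (hV : IsVolterra V) :
    sInf {r : ℝ | ∃ F : L1 →L[ℝ] C01,
        LinearMap.rank (F : L1 →ₗ[ℝ] C01) < (n : Cardinal) ∧ r = ‖V - F‖} = 1 / 2 := by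
  have h1n : (1 : Cardinal) < (n : Cardinal) := by
    exact_mod_cast (by omega : 1 < n)
  have hF0rank : LinearMap.rank (F0 : L1 →ₗ[ℝ] C01) < (n : Cardinal) :=
    lt_of_le_of_lt rank_F0_le h1n
  have hF0aleph : LinearMap.rank (F0 : L1 →ₗ[ℝ] C01) < Cardinal.aleph0 :=
    lt_of_le_of_lt rank_F0_le Cardinal.one_lt_aleph0
  have heq : ‖V - F0‖ = 1/2 :=
    le_antisymm (norm_V_sub_F0_le V hV) (half_le_norm_sub V hV F0 hF0aleph)
  refine IsLeast.csInf_eq ⟨⟨F0, hF0rank, heq.symm⟩, ?_⟩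
  rintro r ⟨F, hFr, rfl⟩
  exact half_le_norm_sub V hV F (hFr.trans (Cardinal.nat_lt_aleph0 n))
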